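/- Suppose (θ₁, θ₂) parametrize the unconditional means (E_F[X₁] = θ₁ and E_F[X₂] = θ₂) in every feasible model, and in every feasible model the conditional mean E[X₂ | X₁ = x₁] strictly decreases in x₁ (the gambler's fallacy condition). If the objective distribution F• has X₁, X₂ independent with means θ₁•, θ₂•, then any method-of-moments estimator from data censored at threshold c satisfies θ₁ᴹ(c) = θ₁• and θ₂ᴹ(c) < θ₂•. -/

import Mathlib

open MeasureTheory Set

/-- Abstract method-of-moments pessimism. Feasible models are encoded by the marginal
distribution `ν θ₁` of `X₁` and the conditional-mean function `g θ₁ θ₂ x₁ = E[X₂ | X₁ = x₁]`.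
The parameters are the unconditional means: `E[X₁] = θ₁` and `E[X₂] = θ₂`. The gambler's
fallacy condition is that `g` strictly decreases in `x₁`. If the objective distribution has
independent draws with means `θ₁•, θ₂•` (so the censored dataset's moments are
`m₁ = θ₁•` and `m₂ = θ₂•`), then any method-of-moments estimator satisfies
`θ₁ᴹ = θ₁•` and `θ₂ᴹ < θ₂•`. -/
theorem mom_estimator_pessimism
    (T1 T2 : Set ℝ) (ν : ℝ → Measure ℝ) (g : ℝ → ℝ → ℝ → ℝ) (c : ℝ) (θ1b θ2b : ℝ)
    (hprob : ∀ θ1 ∈ T1, IsProbabilityMeasure (ν θ1))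
    (hmean_param : ∀ θ1 ∈ T1, (∫ x, x ∂(ν θ1)) = θ1)
    (htotal : ∀ θ1 ∈ T1, ∀ θ2 ∈ T2, (∫ x, g θ1 θ2 x ∂(ν θ1)) = θ2)
    (hg_anti : ∀ θ1 ∈ T1, ∀ θ2 ∈ T2, StrictAnti (g θ1 θ2))
    (hpos : ∀ θ1 ∈ T1, 0 < ν θ1 (Iic c))
    (hlt1 : ∀ θ1 ∈ T1, ν θ1 (Iic c) < 1)
    (hint : ∀ θ1 ∈ T1, ∀ θ2 ∈ T2, Integrable (g θ1 θ2) (ν θ1)) :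
    ∀ θ1 ∈ T1, ∀ θ2 ∈ T2,
      (∫ x, x ∂(ν θ1)) = θ1b →
      (∫ x in Iic c, g θ1 θ2 x ∂(ν θ1)) / (ν θ1 (Iic c)).toReal = θ2b →
      θ1 = θ1b ∧ θ2 < θ2b := by
  intro θ1 h1 θ2 h2 hm1 hm2
  have hprob' := hprob θ1 h1
  set μ := ν θ1 with hμ
  constructor
  · rw [← hmean_param θ1 h1, hm1]
  -- notation
  set f := g θ1 θ2 with hf
  have hintf : Integrable f μ := hint θ1 h1 θ2 h2
  set A := ∫ x in Iic c, f x ∂μ with hA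
  set B := ∫ x in Ioi c, f x ∂μ with hB
  have hpne : μ (Iic c) ≠ ⊤ := (measure_lt_top μ _).ne
  set p := (μ (Iic c)).toReal with hp
  set q := (μ (Ioi c)).toReal with hq
  have hppos : 0 < p := ENNReal.toReal_pos (hpos θ1 h1).ne' hpne
  have hqpos : 0 < q := by
    have : 0 < μ (Ioi c) := by
      by_contra h
      push_neg at h
      have h0 : μ (Ioi c) = 0 := le_antisymm h zero_le
      have := hlt1 θ1 h1
      have hun : μ (Iic c) = 1 := by
        have : μ (Iic c ∪ Ioi c) = 1 := by
          rw [Iic_union_Ioi]; exact measure_univ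
        have hle : μ (Iic c ∪ Ioi c) ≤ μ (Iic c) + μ (Ioi c) := measure_union_le _ _
        rw [this, h0, add_zero] at hle
        exact le_antisymm (le_of_lt (hlt1 θ1 h1)) hle
      exact absurd hun (hlt1 θ1 h1).ne
    exact ENNReal.toReal_pos this.ne' (measure_lt_top μ _).ne
  have hpq : p + q = 1 := by
    rw [hp, hq, ← ENNReal.toReal_add hpne (measure_lt_top μ _).ne]
    have : μ (Iic c) + μ (Ioi c) = 1 := by
      rw [← measure_union (Iic_disjoint_Ioi le_rfl) measurableSet_Ioi, Iic_union_Ioi]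
      exact measure_univ
    rw [this]; simp
  -- split total integral
  have hsplit : A + B = θ2 := by
    rw [hA, hB, ← htotal θ1 h1 θ2 h2]
    have := integral_add_compl (measurableSet_Iic (a := c)) hintf
    rwa [compl_Iic] at this
  -- lower bound A ≥ f c * p
  have hAlb : f c * p ≤ A := by
    apply setIntegral_ge_of_const_le_real measurableSet_Iic hpne
    · intro x hx
      rcases eq_or_lt_of_le (mem_Iic.mp hx) with h | h
      · rw [h]
      · exact le_of_lt ((hg_anti θ1 h1 θ2 h2) h)
    · exact hintf.integrableOn
  -- strict upper bound B < f c * q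
  have hBub : B < f c * q := by
    have hpos' : 0 < ∫ x in Ioi c, (f c - f x) ∂μ := by
      rw [MeasureTheory.integral_pos_iff_support_of_nonneg_ae]
      · have hsub : Ioi c ⊆ Function.support fun x => f c - f x := by
          intro x hx
          have := (hg_anti θ1 h1 θ2 h2) (mem_Ioi.mp hx)
          simp [Function.support, sub_ne_zero]
          exact this.ne'
        have hm0 : 0 < μ (Ioi c) := by
          rcases lt_or_eq_of_le (zero_le : 0 ≤ μ (Ioi c)) with h | h
          · exact h
          · exfalso; rw [hq, ← h] at hqpos; simp at hqpos
        calc (0 : ENNReal) < μ (Ioi c) := hm0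
          _ = (μ.restrict (Ioi c)) (Ioi c) := by
              rw [Measure.restrict_apply measurableSet_Ioi, inter_self]
          _ ≤ (μ.restrict (Ioi c)) (Function.support fun x => f c - f x) := by
              rw [Measure.restrict_apply' measurableSet_Ioi,
                Measure.restrict_apply' measurableSet_Ioi]
              exact measure_mono (by rw [inter_self]; exact fun x hx => ⟨hsub hx, hx⟩)
      · filter_upwards [ae_restrict_mem measurableSet_Ioi] with x hx
        have := (hg_anti θ1 h1 θ2 h2) (mem_Ioi.mp hx)
        simp only [Pi.zero_apply]
        linarith
      · exact (integrableOn_const (measure_lt_top _ _).ne).sub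
          hintf.integrableOn
    have heq : ∫ x in Ioi c, (f c - f x) ∂μ = f c * q - B := by
      rw [integral_sub (integrableOn_const (C := f c) (s := Ioi c) (μ := μ) (measure_lt_top _ _).ne)
        hintf.integrableOn, setIntegral_const]
      simp [hq, mul_comm, Measure.real]
      rfl
    linarith [heq ▸ hpos']
  -- conclude
  rw [← hm2]
  have hfcA : f c ≤ A / p := (le_div_iff₀ hppos).mpr (by linarith)
  have hB2 : B < (A / p) * q :=
    lt_of_lt_of_le hBub (mul_le_mul_of_nonneg_right hfcA hqpos.le)
  have hApp : A / p * p = A := div_mul_cancel₀ A hppos.ne'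
  have hDq : A / p * q = A / p - A := by
    have hq' : q = 1 - p := by linarith
    rw [hq', mul_sub, mul_one, hApp]
  linarith
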